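/- arXiv:1707.06802 — 6 statements merged into one kernel-verified Lean document; each statement's English description precedes it below -/
import Mathlib

section
/- The identity matrix of size n is an alternating sign matrix uniquely determined by its antidiagonal X-ray, which is the vector with x_k = 1 if k is odd and 0 if k is even (for k = 1,…,2n-1). -/
open Finset Matrix

/-- An alternating sign matrix: entries in {-1,0,1}, all row and column sums
equal 1, and consecutive nonzero entries in each row and column have
opposite signs. -/
def IsASM {n : ℕ} (A : Matrix (Fin n) (Fin n) ℤ) : Prop :=
  (∀ i j, A i j = -1 ∨ A i j = 0 ∨ A i j = 1) ∧
  (∀ i, ∑ j, A i j = 1) ∧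
  (∀ j, ∑ i, A i j = 1) ∧
  (∀ i (j₁ j₂ : Fin n), j₁ < j₂ → A i j₁ ≠ 0 → A i j₂ ≠ 0 →
    (∀ j, j₁ < j → j < j₂ → A i j = 0) → A i j₂ = -A i j₁) ∧
  (∀ j (i₁ i₂ : Fin n), i₁ < i₂ → A i₁ j ≠ 0 → A i₂ j ≠ 0 →
    (∀ i, i₁ < i → i < i₂ → A i j = 0) → A i₂ j = -A i₁ j)

/-- The `k`-th antidiagonal sum (1-based: cells `(i,j)` with `i+j = k+1`,
i.e. `0`-based indices with `i+j+1 = k`), for `k = 1, …, 2n-1`. -/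
def xray {n : ℕ} (A : Matrix (Fin n) (Fin n) ℤ) (k : ℕ) : ℤ :=
  ∑ i : Fin n, ∑ j : Fin n, if (i : ℕ) + (j : ℕ) + 1 = k then A i j else 0

/-- `A` is the unique ASM with its X-ray. -/
def DeterminedByXray {n : ℕ} (A : Matrix (Fin n) (Fin n) ℤ) : Prop :=
  ∀ B : Matrix (Fin n) (Fin n) ℤ, IsASM B → (∀ k, xray B k = xray A k) → B = A

/-- The permutation matrix of `σ`. -/
def permMatrix {n : ℕ} (σ : Equiv.Perm (Fin n)) : Matrix (Fin n) (Fin n) ℤ :=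
  fun i j => if σ j = i then 1 else 0

lemma xray_one {n : ℕ} (k : ℕ) :
    xray (1 : Matrix (Fin n) (Fin n) ℤ) k =
      if k % 2 = 1 ∧ k < 2 * n then 1 else 0 := by
  unfold xray
  have h1 : ∀ i j : Fin n,
      (if (i : ℕ) + (j : ℕ) + 1 = k then (1 : Matrix (Fin n) (Fin n) ℤ) i j else 0)
      = if j = i then (if (i : ℕ) + (i : ℕ) + 1 = k then (1 : ℤ) else 0) else 0 := by
    intro i j
    rw [Matrix.one_apply]
    by_cases h : j = i
    · subst h; simp
    · have : ¬ i = j := fun hh => h hh.symm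
      simp [h, this]
  simp_rw [h1, Finset.sum_ite_eq' Finset.univ _ (fun _ => _), Finset.mem_univ, if_pos]
  by_cases hk : k % 2 = 1 ∧ k < 2 * n
  · obtain ⟨h1', h2'⟩ := hk
    set t := k / 2 with ht
    have htn : t < n := by omega
    have hkt : k = 2 * t + 1 := by omega
    rw [if_pos ⟨h1', h2'⟩]
    rw [Finset.sum_eq_single (⟨t, htn⟩ : Fin n)]
    · simp; omega
    · intro b _ hb
      rw [if_neg]
      intro hc
      apply hb
      ext
      simp only []
      omega
    · intro h; exact absurd (Finset.mem_univ _) h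
  · rw [if_neg hk]
    apply Finset.sum_eq_zero
    intro i _
    rw [if_neg]
    intro hc
    have : (i : ℕ) < n := i.isLt
    omega

lemma isASM_one {n : ℕ} : IsASM (1 : Matrix (Fin n) (Fin n) ℤ) := by
  refine ⟨?_, ?_, ?_, ?_, ?_⟩
  · intro i j
    rw [Matrix.one_apply]
    split_ifs <;> simp
  · intro i
    simp [Matrix.one_apply]
  · intro j
    simp [Matrix.one_apply]
  · intro i j₁ j₂ hlt h1 h2 _
    exfalso
    rw [Matrix.one_apply] at h1 h2
    have e1 : i = j₁ := by by_contra h; simp [h] at h1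
    have e2 : i = j₂ := by by_contra h; simp [h] at h2
    rw [← e1, ← e2] at hlt
    exact lt_irrefl _ hlt
  · intro j i₁ i₂ hlt h1 h2 _
    exfalso
    rw [Matrix.one_apply] at h1 h2
    have e1 : i₁ = j := by by_contra h; simp [h] at h1
    have e2 : i₂ = j := by by_contra h; simp [h] at h2
    rw [e1] at hlt; rw [e2] at hlt
    exact lt_irrefl _ hlt

lemma determined_one {n : ℕ} : DeterminedByXray (1 : Matrix (Fin n) (Fin n) ℤ) := by
  intro B hB hx
  obtain ⟨hent, hrow, hcol, hrowalt, hcolalt⟩ := hB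
  have key : ∀ k : ℕ, ∀ i j : Fin n, (i : ℕ) + (j : ℕ) + 1 = k →
      B i j = (1 : Matrix (Fin n) (Fin n) ℤ) i j := by
    intro k
    induction k using Nat.strong_induction_on with
    | _ k IH =>
    intro i j hij
    -- Off-antidiagonal entries on diagonal k, known nonpositive
    have hle : ∀ a b : Fin n, a ≠ b → (a : ℕ) + (b : ℕ) + 1 = k → B a b ≤ 0 := by
      intro a b hab hk
      rcases lt_or_gt_of_ne hab with hlt | hgt
      · -- row argument, a < b
        have hab' : (a : ℕ) < (b : ℕ) := hlt
        have hdiag : B a a = 1 := by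
          have := IH ((a : ℕ) + (a : ℕ) + 1) (by omega) a a rfl
          rwa [Matrix.one_apply_eq] at this
        by_cases hz : B a b = 0
        · rw [hz]
        · have hmid : ∀ c : Fin n, a < c → c < b → B a c = 0 := by
            intro c hc1 hc2
            have hc1' : (a : ℕ) < (c : ℕ) := hc1
            have hc2' : (c : ℕ) < (b : ℕ) := hc2
            have := IH ((a : ℕ) + (c : ℕ) + 1) (by omega) a c rfl
            rw [this, Matrix.one_apply_ne]
            intro h
            rw [h] at hc1'
            omega
          have := hrowalt a a b hlt (by rw [hdiag]; norm_num) hz hmid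
          rw [this, hdiag]; norm_num
      · -- column argument, b < a
        have hab' : (b : ℕ) < (a : ℕ) := hgt
        have hdiag : B b b = 1 := by
          have := IH ((b : ℕ) + (b : ℕ) + 1) (by omega) b b rfl
          rwa [Matrix.one_apply_eq] at this
        by_cases hz : B a b = 0
        · rw [hz]
        · have hmid : ∀ c : Fin n, b < c → c < a → B c b = 0 := by
            intro c hc1 hc2
            have hc1' : (b : ℕ) < (c : ℕ) := hc1
            have hc2' : (c : ℕ) < (a : ℕ) := hc2
            have := IH ((c : ℕ) + (b : ℕ) + 1) (by omega) c b rfl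
            rw [this, Matrix.one_apply_ne]
            intro h
            rw [h] at hc1'
            omega
          have := hcolalt b b a hgt (by rw [hdiag]; norm_num) hz hmid
          rw [this, hdiag]; norm_num
    have hxk := hx k
    rw [xray_one] at hxk
    by_cases hpar : k % 2 = 1
    · -- odd case: k = 2t+1, diagonal cell (t,t) present
      have hk2n : k < 2 * n := by
        have hi : (i : ℕ) < n := i.isLt
        have hj : (j : ℕ) < n := j.isLt
        omega
      rw [if_pos ⟨hpar, hk2n⟩] at hxk
      set t := k / 2 with ht
      have htn : t < n := by omega
      set T : Fin n := ⟨t, htn⟩ with hT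
      have hTT : (T : ℕ) + (T : ℕ) + 1 = k := by simp [hT]; omega
      have hne : ∀ a b : Fin n, (a : ℕ) + (b : ℕ) + 1 = k → ¬(a = T ∧ b = T) → a ≠ b := by
        intro a b h hnab hab
        apply hnab
        have : (a : ℕ) = t := by omega
        constructor <;> · ext; simp [hT]; omega
      have hpt : ∀ a b : Fin n, (if (a : ℕ) + (b : ℕ) + 1 = k then B a b else 0)
          = (if b = T then (if a = T then B T T else 0) else 0)
            + (if ((a : ℕ) + (b : ℕ) + 1 = k ∧ ¬(a = T ∧ b = T)) then B a b else 0) := by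
        intro a b
        by_cases h2 : a = T <;> by_cases h3 : b = T <;>
          simp [h2, h3, hTT]
      have hsplit : xray B k =
          B T T + ∑ a : Fin n, ∑ b : Fin n,
            (if ((a : ℕ) + (b : ℕ) + 1 = k ∧ ¬(a = T ∧ b = T)) then B a b else 0) := by
        unfold xray
        simp only [hpt, Finset.sum_add_distrib]
        congr 1
        simp [Finset.sum_ite_eq']
      have hterm : ∀ a b : Fin n,
          (if ((a : ℕ) + (b : ℕ) + 1 = k ∧ ¬(a = T ∧ b = T)) then B a b else 0) ≤ 0 := by
        intro a b
        by_cases h : ((a : ℕ) + (b : ℕ) + 1 = k ∧ ¬(a = T ∧ b = T))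
        · rw [if_pos h]; exact hle a b (hne a b h.1 h.2) h.1
        · rw [if_neg h]
      have hS0 : (∑ a : Fin n, ∑ b : Fin n,
          (if ((a : ℕ) + (b : ℕ) + 1 = k ∧ ¬(a = T ∧ b = T)) then B a b else 0)) = 0 := by
        have hle1 : B T T ≤ 1 := by rcases hent T T with h | h | h <;> omega
        have hSle : (∑ a : Fin n, ∑ b : Fin n,
            (if ((a : ℕ) + (b : ℕ) + 1 = k ∧ ¬(a = T ∧ b = T)) then B a b else 0)) ≤ 0 :=
          Finset.sum_nonpos (fun a _ => Finset.sum_nonpos (fun b _ => hterm a b))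
        rw [hsplit] at hxk
        omega
      have hzero : ∀ a b : Fin n,
          (if ((a : ℕ) + (b : ℕ) + 1 = k ∧ ¬(a = T ∧ b = T)) then B a b else 0) = 0 := by
        intro a b
        have houter := (Finset.sum_eq_zero_iff_of_nonpos
          (fun (a : Fin n) _ => Finset.sum_nonpos (fun (b : Fin n) _ => hterm a b))).mp hS0
        exact (Finset.sum_eq_zero_iff_of_nonpos
          (fun (b : Fin n) _ => hterm a b)).mp (houter a (Finset.mem_univ a)) b (Finset.mem_univ b)
      have hBTT : B T T = 1 := by
        rw [hsplit, hS0] at hxk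
        omega
      by_cases hij' : i = j
      · have hiT : i = T := by ext; simp [hT]; omega
        have hjT : j = T := by ext; simp [hT]; omega
        rw [hiT, hjT, hBTT, Matrix.one_apply_eq]
      · have := hzero i j
        rw [if_pos ⟨hij, fun h => hij' (h.1.trans h.2.symm)⟩] at this
        rw [this, Matrix.one_apply_ne hij']
    · -- even case: all entries on antidiagonal k are ≤ 0, and they sum to 0
      have hxk0 : xray B k = 0 := by
        rw [hxk, if_neg]; intro h; exact hpar h.1
      have hne : ∀ a b : Fin n, (a : ℕ) + (b : ℕ) + 1 = k → a ≠ b := by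
        intro a b h hab
        subst hab
        omega
      have hterm : ∀ a b : Fin n,
          (if (a : ℕ) + (b : ℕ) + 1 = k then B a b else 0) ≤ 0 := by
        intro a b
        by_cases h : (a : ℕ) + (b : ℕ) + 1 = k
        · rw [if_pos h]; exact hle a b (hne a b h) h
        · rw [if_neg h]
      have hz : ∀ a b : Fin n,
          (if (a : ℕ) + (b : ℕ) + 1 = k then B a b else 0) = 0 := by
        intro a b
        have houter := (Finset.sum_eq_zero_iff_of_nonpos
          (fun (a : Fin n) _ => Finset.sum_nonpos (fun (b : Fin n) _ => hterm a b))).mp hxk0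
        exact (Finset.sum_eq_zero_iff_of_nonpos
          (fun (b : Fin n) _ => hterm a b)).mp (houter a (Finset.mem_univ a)) b (Finset.mem_univ b)
      have := hz i j
      rw [if_pos hij] at this
      rw [this, Matrix.one_apply_ne (hne i j hij)]
  ext i j
  exact key ((i : ℕ) + (j : ℕ) + 1) i j rfl

theorem stmt_8 {n : ℕ} :
    IsASM (1 : Matrix (Fin n) (Fin n) ℤ) ∧
    DeterminedByXray (1 : Matrix (Fin n) (Fin n) ℤ) ∧
    (∀ k, 1 ≤ k → k ≤ 2 * n - 1 →
      xray (1 : Matrix (Fin n) (Fin n) ℤ) k = if Odd k then 1 else 0) := by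
  refine ⟨isASM_one, determined_one, ?_⟩
  intro k hk1 hk2
  rw [xray_one]
  by_cases h : Odd k
  · rw [if_pos h]
    rw [if_pos ⟨Nat.odd_iff.mp h, by omega⟩]
  · rw [if_neg h, if_neg]
    rintro ⟨h1, _⟩
    exact h (Nat.odd_iff.mpr h1)
end

section
/- For an n×n alternating sign matrix, every entry of the X-ray satisfies -⌊min(k, 2n-k)/2⌋ ≤ x_k and x_k ≤ ⌈min(k, 2n-k)/2⌉ + ⌊min(k, 2n-k)/2⌋, i.e., |x_k| is at most the length min(k, 2n-k) of the k-th antidiagonal. -/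
open Finset Matrix

theorem stmt_9 {n : ℕ} (A : Matrix (Fin n) (Fin n) ℤ) (hA : IsASM A)
    (k : ℕ) (hk1 : 1 ≤ k) (hk2 : k ≤ 2 * n - 1) :
    |xray A k| ≤ (min k (2 * n - k) : ℤ) := by
  have hbound : |xray A k| ≤
      ∑ i : Fin n, ∑ j : Fin n, (if (i : ℕ) + (j : ℕ) + 1 = k then (1:ℤ) else 0) := by
    calc |xray A k| ≤ ∑ i : Fin n, |∑ j : Fin n,
          if (i : ℕ) + (j : ℕ) + 1 = k then A i j else 0| :=
        Finset.abs_sum_le_sum_abs _ _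
      _ ≤ ∑ i : Fin n, ∑ j : Fin n,
          |if (i : ℕ) + (j : ℕ) + 1 = k then A i j else 0| := by
        apply Finset.sum_le_sum; intro i _; exact Finset.abs_sum_le_sum_abs _ _
      _ ≤ _ := by
        apply Finset.sum_le_sum; intro i _
        apply Finset.sum_le_sum; intro j _
        by_cases h : (i : ℕ) + (j : ℕ) + 1 = k
        · simp only [if_pos h]
          rcases hA.1 i j with h1 | h1 | h1 <;> simp [h1]
        · simp [h]
  have inner : ∀ i : Fin n,
      (∑ j : Fin n, if (i : ℕ) + (j : ℕ) + 1 = k then (1:ℤ) else 0) =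
      (if (i : ℕ) + 1 ≤ k ∧ k ≤ (i : ℕ) + n then (1:ℤ) else 0) := by
    intro i
    by_cases h : (i : ℕ) + 1 ≤ k ∧ k ≤ (i : ℕ) + n
    · rw [if_pos h]
      have hj : k - (i : ℕ) - 1 < n := by omega
      rw [Finset.sum_eq_single (⟨k - (i : ℕ) - 1, hj⟩ : Fin n)]
      · rw [if_pos]; simp; omega
      · intro b _ hb
        rw [if_neg]
        intro hc
        exact hb (Fin.ext (by simp; omega))
      · simp
    · rw [if_neg h]
      apply Finset.sum_eq_zero
      intro j _
      rw [if_neg]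
      have := j.isLt
      omega
  rw [Finset.sum_congr rfl (fun i _ => inner i)] at hbound
  have hcount : (∑ i : Fin n, if (i : ℕ) + 1 ≤ k ∧ k ≤ (i : ℕ) + n then (1:ℤ) else 0)
      = (min k (2 * n - k) : ℤ) := by
    rw [Fin.sum_univ_eq_sum_range (fun i => if i + 1 ≤ k ∧ k ≤ i + n then (1:ℤ) else 0)]
    rw [Finset.sum_ite, Finset.sum_const, Finset.sum_const]
    have : (Finset.range n).filter (fun i => i + 1 ≤ k ∧ k ≤ i + n)
        = Finset.Ico (k - n) (min k n) := by
      ext i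
      simp only [Finset.mem_filter, Finset.mem_range, Finset.mem_Ico]
      omega
    rw [this, Nat.card_Ico]
    simp only [nsmul_eq_mul, mul_one, mul_zero, add_zero]
    have : min k n - (k - n) = min k (2 * n - k) := by omega
    rw [this]
    omega
  rw [hcount] at hbound
  exact hbound
end

section
/- There exists an injection from the set of Dyck paths of semilength n into the set of n×n alternating sign matrices, whose image consists of symmetric alternating sign matrices, such that distinct Dyck paths map to ASMs with distinct X-rays. -/
open Finset Matrix

set_option maxHeartbeats 1000000

set_option maxHeartbeats 1000000

namespace S13
open List DyckStep

/-- `w p t` : the `(t+1)`-th step of `p` is `U` (out of range: `false`). -/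
def w (p : DyckWord) (t : ℕ) : Prop := p.toList.getD t D = U

instance (p : DyckWord) (t : ℕ) : Decidable (w p t) := by unfold w; infer_instance

def cnt (p : DyckWord) (k : ℕ) : ℕ := (p.toList.take k).count U

/-- height of the path after `k` steps (for `k ≤ 2n`). -/
def hgt (p : DyckWord) (k : ℕ) : ℤ := 2 * cnt p k - k

lemma hgt_zero (p : DyckWord) : hgt p 0 = 0 := by simp [hgt, cnt]

lemma cnt_succ (p : DyckWord) (k : ℕ) :
    cnt p (k+1) = cnt p k + (if w p k then 1 else 0) := by
  unfold cnt w
  rw [List.take_succ, List.count_append]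
  have hg : p.toList.getD k D = p.toList[k]?.getD D := List.getD_eq_getElem?_getD
  cases h : p.toList[k]? with
  | none => rw [h] at hg; simp [h, hg]
  | some a => rw [h] at hg; cases a <;> simp [h, hg]

lemma hgt_succ (p : DyckWord) (k : ℕ) :
    hgt p (k+1) = hgt p k + (if w p k then 1 else -1) := by
  unfold hgt
  rw [cnt_succ]
  split_ifs <;> push_cast <;> ring

lemma countU_add_countD (l : List DyckStep) : l.count U + l.count D = l.length := by
  induction l with
  | nil => simp
  | cons a t ih => cases a <;> simp [List.count_cons] <;> omega

lemma hgt_nonneg (p : DyckWord) (k : ℕ) (hk : k ≤ p.toList.length) : 0 ≤ hgt p k := by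
  have h1 := p.count_D_le_count_U k
  have h2 := countU_add_countD (p.toList.take k)
  have h3 : (p.toList.take k).length = k := by rw [List.length_take]; omega
  unfold hgt cnt
  omega

lemma hgt_le (p : DyckWord) (k : ℕ) : hgt p k ≤ k := by
  have h1 : (p.toList.take k).count U ≤ (p.toList.take k).length := List.count_le_length
  have h2 : (p.toList.take k).length ≤ k := by rw [List.length_take]; omega
  unfold hgt cnt
  omega

lemma hgt_add_le (p : DyckWord) (k : ℕ) : hgt p k + k ≤ (p.toList.length : ℤ) := by
  have h1 : (p.toList.take k).count U ≤ p.toList.count U := (List.take_sublist k _).count_le U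
  have h2 := countU_add_countD p.toList
  have h3 := p.count_U_eq_count_D
  unfold hgt cnt
  omega

lemma hgt_final (p : DyckWord) : hgt p p.toList.length = 0 := by
  have h2 := countU_add_countD p.toList
  have h3 := p.count_U_eq_count_D
  unfold hgt cnt
  rw [List.take_length]
  omega

lemma lip (p : DyckWord) (a d : ℕ) :
    hgt p (a + d) ≤ hgt p a + d ∧ hgt p a ≤ hgt p (a + d) + d := by
  induction d with
  | zero => simp
  | succ d ih =>
    have h3 := hgt_succ p (a+d)
    rw [show a + (d+1) = (a+d)+1 from rfl]
    split_ifs at h3 <;> constructor <;> push_cast <;> omega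

lemma w_ge (p : DyckWord) (t : ℕ) (h : p.toList.length ≤ t) : ¬ w p t := by
  unfold w
  rw [List.getD_eq_default _ _ h]
  simp


open Matrix in
/-- the banded ASM attached to a Dyck word. -/
def mat (n : ℕ) (p : DyckWord) : Matrix (Fin n) (Fin n) ℤ := fun i j =>
  if |(i:ℤ) - (j:ℤ)| < hgt p ((i:ℕ)+(j:ℕ)+1) then
    (if w p ((i:ℕ)+(j:ℕ)) then (if w p ((i:ℕ)+(j:ℕ)+1) then 0 else 1)
     else (if w p ((i:ℕ)+(j:ℕ)+1) then -1 else 0)) else 0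

lemma mat_symm (n : ℕ) (p : DyckWord) (i j : Fin n) : mat n p i j = mat n p j i := by
  unfold mat
  rw [abs_sub_comm, add_comm (i:ℕ) (j:ℕ)]

lemma mat_entries (n : ℕ) (p : DyckWord) (i j : Fin n) :
    mat n p i j = -1 ∨ mat n p i j = 0 ∨ mat n p i j = 1 := by
  unfold mat; split_ifs <;> simp

def Vf (p : DyckWord) (c : ℤ) (k : ℕ) : ℤ :=
  if w p k then -(if (k:ℤ) < hgt p k + c then 1 else 0)
  else (if c < hgt p k + k then 1 else 0) - 1

lemma mat_eq_tele (n : ℕ) (p : DyckWord) (hp : p.toList.length = 2*n) (i j : Fin n) :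
    mat n p i j = Vf p (2*(i:ℕ)+1) ((i:ℕ)+(j:ℕ)+1) - Vf p (2*(i:ℕ)+1) ((i:ℕ)+(j:ℕ)) := by
  have hi := i.isLt
  have hj := j.isLt
  have h0 : 0 ≤ hgt p ((i:ℕ)+(j:ℕ)+1) := hgt_nonneg p _ (by omega)
  have hpar : hgt p ((i:ℕ)+(j:ℕ)+1) + ((i:ℕ)+(j:ℕ)+1) = 2 * cnt p ((i:ℕ)+(j:ℕ)+1) := by
    unfold hgt; push_cast; ring
  have hstep := hgt_succ p ((i:ℕ)+(j:ℕ))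
  have habs : |(i:ℤ) - (j:ℤ)| < hgt p ((i:ℕ)+(j:ℕ)+1) ↔
      ((((i:ℕ)+(j:ℕ)+1 : ℕ) : ℤ) < hgt p ((i:ℕ)+(j:ℕ)+1) + (2*(i:ℕ)+1) ∧
       ((2*(i:ℕ)+1 : ℤ) < hgt p ((i:ℕ)+(j:ℕ)+1) + (((i:ℕ)+(j:ℕ)+1 : ℕ) : ℤ))) := by
    rw [abs_sub_lt_iff]
    constructor <;> intro hc <;> push_cast at * <;> omega
  unfold mat Vf
  rw [if_congr habs rfl rfl]
  by_cases hB : w p ((i:ℕ)+(j:ℕ)) <;> by_cases hC : w p ((i:ℕ)+(j:ℕ)+1) <;>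
    simp only [hB, hC, if_true, if_false, eq_iff_iff, iff_true, iff_false] at hstep ⊢ <;>
    split_ifs <;> push_cast at * <;> omega


lemma Vf_start (n : ℕ) (p : DyckWord) (hp : p.toList.length = 2*n) (i : Fin n) :
    Vf p (2*(i:ℕ)+1) (i:ℕ) = -1 := by
  have hi := i.isLt
  have h0 : 0 ≤ hgt p (i:ℕ) := hgt_nonneg p _ (by omega)
  have h1 := hgt_le p (i:ℕ)
  unfold Vf
  split_ifs <;> omega

lemma Vf_end (n : ℕ) (p : DyckWord) (hp : p.toList.length = 2*n) (i : Fin n) :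
    Vf p (2*(i:ℕ)+1) ((i:ℕ) + n) = 0 := by
  have hi := i.isLt
  have h0 : 0 ≤ hgt p ((i:ℕ)+n) := hgt_nonneg p _ (by omega)
  have h1 : 0 ≤ hgt p ((i:ℕ)+n+1) := hgt_nonneg p _ (by omega)
  have h2 := hgt_add_le p ((i:ℕ)+n+1)
  have h3 := hgt_succ p ((i:ℕ)+n)
  rw [hp] at h2
  by_cases hw : w p ((i:ℕ)+n) <;>
    simp only [hw, if_true, if_false, eq_iff_iff, iff_true, iff_false] at h3 <;>
    unfold Vf <;>
    simp only [hw, if_true, if_false, eq_iff_iff, iff_true, iff_false] <;>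
    split_ifs <;> push_cast at * <;> omega

lemma row_sum (n : ℕ) (p : DyckWord) (hp : p.toList.length = 2*n) (i : Fin n) :
    ∑ j, mat n p i j = 1 := by
  have hcal : ∀ j : Fin n, mat n p i j =
      (fun t => Vf p (2*(i:ℕ)+1) ((i:ℕ)+t)) ((j:ℕ)+1) - (fun t => Vf p (2*(i:ℕ)+1) ((i:ℕ)+t)) (j:ℕ) :=
    fun j => mat_eq_tele n p hp i j
  calc ∑ j, mat n p i j
      = ∑ j : Fin n, ((fun t => Vf p (2*(i:ℕ)+1) ((i:ℕ)+t)) ((j:ℕ)+1)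
          - (fun t => Vf p (2*(i:ℕ)+1) ((i:ℕ)+t)) (j:ℕ)) := Finset.sum_congr rfl (fun j _ => hcal j)
    _ = ∑ t ∈ Finset.range n, ((fun t => Vf p (2*(i:ℕ)+1) ((i:ℕ)+t)) (t+1)
          - (fun t => Vf p (2*(i:ℕ)+1) ((i:ℕ)+t)) t) :=
        Fin.sum_univ_eq_sum_range (fun t => (fun t => Vf p (2*(i:ℕ)+1) ((i:ℕ)+t)) (t+1)
          - (fun t => Vf p (2*(i:ℕ)+1) ((i:ℕ)+t)) t) n
    _ = Vf p (2*(i:ℕ)+1) ((i:ℕ)+n) - Vf p (2*(i:ℕ)+1) ((i:ℕ)+0) :=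
        Finset.sum_range_sub (fun t => Vf p (2*(i:ℕ)+1) ((i:ℕ)+t)) n
    _ = 1 := by rw [Vf_end n p hp i]; rw [show (i:ℕ)+0 = (i:ℕ) from rfl, Vf_start n p hp i]; ring


lemma mat_ne {n : ℕ} {p : DyckWord} {i j : Fin n} (h : mat n p i j ≠ 0) :
    |(i:ℤ) - (j:ℤ)| < hgt p ((i:ℕ)+(j:ℕ)+1) ∧
    ((w p ((i:ℕ)+(j:ℕ)) ∧ ¬ w p ((i:ℕ)+(j:ℕ)+1) ∧ mat n p i j = 1) ∨
     (¬ w p ((i:ℕ)+(j:ℕ)) ∧ w p ((i:ℕ)+(j:ℕ)+1) ∧ mat n p i j = -1)) := by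
  unfold mat at h ⊢
  split_ifs at h ⊢ <;> simp_all

lemma mat_ne' {n : ℕ} {p : DyckWord} {i j : Fin n}
    (habs : |(i:ℤ) - (j:ℤ)| < hgt p ((i:ℕ)+(j:ℕ)+1))
    (hne : ¬ (w p ((i:ℕ)+(j:ℕ)) ↔ w p ((i:ℕ)+(j:ℕ)+1))) : mat n p i j ≠ 0 := by
  unfold mat
  split_ifs <;> simp_all

lemma g_mid (p : DyckWord) (c : ℤ) (k₁ t k₂ : ℕ) (h1 : k₁ ≤ t) (h2 : t ≤ k₂)
    (g1 : |(k₁:ℤ) - c| < hgt p k₁) (g2 : |(k₂:ℤ) - c| < hgt p k₂) :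
    |(t:ℤ) - c| < hgt p t := by
  obtain ⟨d1, rfl⟩ : ∃ d, t = k₁ + d := ⟨t - k₁, by omega⟩
  obtain ⟨d2, rfl⟩ : ∃ d, k₂ = (k₁ + d1) + d := ⟨k₂ - (k₁ + d1), by omega⟩
  have l1 := lip p k₁ d1
  have l2 := lip p (k₁ + d1) d2
  rw [abs_sub_lt_iff] at *
  push_cast at *
  omega

lemma abs_translate {n : ℕ} (i j : Fin n) (H : ℤ) :
    |(((i:ℕ)+(j:ℕ)+1 : ℕ) : ℤ) - (2*(i:ℕ)+1)| = |(i:ℤ) - (j:ℤ)| := by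
  rw [abs_sub_comm]
  congr 1
  push_cast
  ring

lemma row_alt (n : ℕ) (p : DyckWord) (hp : p.toList.length = 2*n) (i j₁ j₂ : Fin n)
    (h12 : j₁ < j₂) (h1 : mat n p i j₁ ≠ 0) (h2 : mat n p i j₂ ≠ 0)
    (h0 : ∀ j, j₁ < j → j < j₂ → mat n p i j = 0) :
    mat n p i j₂ = - mat n p i j₁ := by
  have hj12 : (j₁:ℕ) < (j₂:ℕ) := h12
  obtain ⟨habs1, hc1⟩ := mat_ne h1
  obtain ⟨habs2, hc2⟩ := mat_ne h2
  have g1 : |(((i:ℕ)+(j₁:ℕ)+1 : ℕ) : ℤ) - (2*(i:ℕ)+1)| < hgt p ((i:ℕ)+(j₁:ℕ)+1) := by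
    rw [abs_translate i j₁ 0]; exact habs1
  have g2 : |(((i:ℕ)+(j₂:ℕ)+1 : ℕ) : ℤ) - (2*(i:ℕ)+1)| < hgt p ((i:ℕ)+(j₂:ℕ)+1) := by
    rw [abs_translate i j₂ 0]; exact habs2
  -- the steps are constant on [i+j₁+1, i+j₂]
  have run : ∀ t, (i:ℕ)+(j₁:ℕ)+1 ≤ t → (t ≤ (i:ℕ)+(j₂:ℕ) → (w p t ↔ w p ((i:ℕ)+(j₁:ℕ)+1))) := by
    intro t hlb
    induction t, hlb using Nat.le_induction with
    | base => exact fun _ => Iff.rfl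
    | succ t ht ih =>
      intro hub
      have ihh := ih (by omega)
      have step : (w p (t+1) ↔ w p t) := by
        by_contra hne
        have hjlt : t - (i:ℕ) < n := by omega
        set j : Fin n := ⟨t - (i:ℕ), hjlt⟩ with hj
        have hij : (i:ℕ) + (j:ℕ) = t := by simp [hj]; omega
        have hz : mat n p i j = 0 := by
          apply h0 <;> rw [Fin.lt_iff_val_lt_val] <;> simp [hj] <;> omega
        have hg := g_mid p (2*(i:ℕ)+1) ((i:ℕ)+(j₁:ℕ)+1) (t+1) ((i:ℕ)+(j₂:ℕ)+1)
          (by omega) (by omega) g1 g2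
        have hmid : |(i:ℤ) - (j:ℤ)| < hgt p ((i:ℕ)+(j:ℕ)+1) := by
          rw [show (i:ℕ)+(j:ℕ)+1 = t+1 from by omega]
          rw [abs_sub_lt_iff] at hg ⊢
          have hjv : (j:ℕ) = t - (i:ℕ) := rfl
          push_cast at hg ⊢
          omega
        have hne2 : ¬ (w p ((i:ℕ)+(j:ℕ)) ↔ w p ((i:ℕ)+(j:ℕ)+1)) := by
          rw [hij]; exact fun hiff => hne hiff.symm
        exact mat_ne' hmid hne2 hz
      exact step.trans ihh
  have hlast := run ((i:ℕ)+(j₂:ℕ)) (by omega) (by omega)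
  rcases hc1 with ⟨hw1, hw1', he1⟩ | ⟨hw1, hw1', he1⟩ <;>
    rcases hc2 with ⟨hw2, hw2', he2⟩ | ⟨hw2, hw2', he2⟩ <;>
    rw [he1, he2] <;>
    first
      | exact absurd (hlast.mp hw2) hw1'
      | exact absurd (hlast.mpr hw1') hw2
      | norm_num

lemma col_alt (n : ℕ) (p : DyckWord) (hp : p.toList.length = 2*n) (j i₁ i₂ : Fin n)
    (h12 : i₁ < i₂) (h1 : mat n p i₁ j ≠ 0) (h2 : mat n p i₂ j ≠ 0)
    (h0 : ∀ i, i₁ < i → i < i₂ → mat n p i j = 0) :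
    mat n p i₂ j = - mat n p i₁ j := by
  rw [mat_symm] at h1 h2 ⊢
  rw [mat_symm n p i₁ j]
  exact row_alt n p hp j i₁ i₂ h12 h1 h2 (fun i hi1 hi2 => by rw [mat_symm]; exact h0 i hi1 hi2)

lemma col_sum (n : ℕ) (p : DyckWord) (hp : p.toList.length = 2*n) (j : Fin n) :
    ∑ i, mat n p i j = 1 := by
  rw [Finset.sum_congr rfl (fun i _ => mat_symm n p i j)]
  exact row_sum n p hp j


def xval (p : DyckWord) (k : ℕ) : ℤ :=
  (if w p (k-1) then (if w p k then 0 else 1) else (if w p k then -1 else 0)) * hgt p k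

open Finset in
lemma xray_mat (n : ℕ) (p : DyckWord) (hp : p.toList.length = 2*n) (k : ℕ)
    (hk1 : 1 ≤ k) (hk2 : k < 2*n) :
    (∑ i : Fin n, ∑ j : Fin n, if (i : ℕ) + (j : ℕ) + 1 = k then mat n p i j else 0)
      = xval p k := by
  set ε : ℤ := if w p (k-1) then (if w p k then 0 else 1) else (if w p k then -1 else 0) with hε
  set ind : ℕ → ℤ := fun i =>
    if ((k:ℤ) < hgt p k + (2*i+1) ∧ (2*(i:ℤ)+1) < hgt p k + k) then 1 else 0 with hind
  have h0 : 0 ≤ hgt p k := hgt_nonneg p k (by omega)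
  have hle := hgt_le p k
  have hadd := hgt_add_le p k
  rw [hp] at hadd
  -- rewrite each nonzero entry
  have hmat : ∀ i j : Fin n, ((i:ℕ)+(j:ℕ)+1 = k) → mat n p i j = ε * ind (i:ℕ) := by
    intro i j hij
    have hij1 : (i:ℕ)+(j:ℕ) = k - 1 := by omega
    unfold mat
    rw [hij, hij1, ← hε]
    have habs : |(i:ℤ) - (j:ℤ)| < hgt p k ↔
        ((k:ℤ) < hgt p k + (2*(i:ℕ)+1) ∧ (2*((i:ℕ):ℤ)+1) < hgt p k + k) := by
      rw [abs_sub_lt_iff]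
      have : ((j:ℕ):ℤ) = (k:ℤ) - 1 - (i:ℕ) := by push_cast [← hij]; ring
      rw [this]
      constructor <;> intro hc <;> push_cast at * <;> constructor <;> omega
    rw [if_congr habs rfl rfl, hind]
    simp only []
    split_ifs <;> ring
  -- inner sums
  have inner : ∀ i : Fin n,
      (∑ j : Fin n, if (i:ℕ)+(j:ℕ)+1 = k then mat n p i j else 0) = ε * ind (i:ℕ) := by
    intro i
    by_cases hr : (i:ℕ)+1 ≤ k ∧ k ≤ (i:ℕ)+n
    · have hjlt : k - 1 - (i:ℕ) < n := by omega
      rw [Finset.sum_eq_single (⟨k - 1 - (i:ℕ), hjlt⟩ : Fin n)]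
      · have hcond : (i:ℕ) + (k - 1 - (i:ℕ)) + 1 = k := by omega
        rw [if_pos hcond, hmat i _ hcond]
      · intro b _ hb
        apply if_neg
        intro hc
        exact hb (Fin.ext (by simp only [Fin.val_mk]; omega))
      · intro hmem; exact absurd (Finset.mem_univ _) hmem
    · have hz : ind (i:ℕ) = 0 := by
        rw [hind]
        simp only []
        rw [if_neg]
        intro ⟨hc1, hc2⟩
        push_cast at hc1 hc2
        omega
      rw [hz, mul_zero]
      apply Finset.sum_eq_zero
      intro j _
      rw [if_neg]
      have := j.isLt
      omega
  rw [Finset.sum_congr rfl (fun i _ => inner i)]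
  -- sum the indicator
  have hsum : ∑ i : Fin n, ind (i:ℕ) = hgt p k := by
    obtain ⟨H, hH⟩ : ∃ H : ℕ, (H:ℤ) = hgt p k := ⟨(hgt p k).toNat, Int.toNat_of_nonneg h0⟩
    have hcnt : hgt p k = 2*(cnt p k : ℤ) - k := rfl
    rw [Fin.sum_univ_eq_sum_range ind n, hind]
    simp only []
    rw [Finset.sum_boole]
    have hfilter : Finset.filter
        (fun i : ℕ => (k:ℤ) < hgt p k + (2*i+1) ∧ (2*(i:ℤ)+1) < hgt p k + k)
        (Finset.range n) = Finset.Ico (cnt p k - H) (cnt p k) := by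
      ext i
      simp only [Finset.mem_filter, Finset.mem_range, Finset.mem_Ico]
      omega
    rw [hfilter, Nat.card_Ico]
    omega
  calc ∑ i : Fin n, ε * ind (i:ℕ) = ε * ∑ i : Fin n, ind (i:ℕ) := by rw [Finset.mul_sum]
    _ = ε * hgt p k := by rw [hsum]
    _ = xval p k := rfl


lemma hgt_congr {p q : DyckWord} (t₀ : ℕ) (hmin : ∀ t < t₀, (w p t ↔ w q t)) :
    ∀ t ≤ t₀, hgt p t = hgt q t := by
  intro t
  induction t with
  | zero => intro _; rw [hgt_zero, hgt_zero]
  | succ t ih =>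
    intro ht
    rw [hgt_succ, hgt_succ, ih (by omega), if_congr (hmin t (by omega)) rfl rfl]

lemma key_aux (n : ℕ) (p q : DyckWord) (hp : p.toList.length = 2*n) (hq : q.toList.length = 2*n)
    (hx : ∀ k, 1 ≤ k → k < 2*n → xval p k = xval q k)
    (t₀ : ℕ) (hmin : ∀ t < t₀, (w p t ↔ w q t)) (hU : w p t₀) (hD : ¬ w q t₀) : False := by
  have ht₀ : t₀ < 2*n := by
    by_contra hc
    exact w_ge p t₀ (by omega) hU
  have hexJ : ∃ j, ¬ w p (t₀ + j + 1) := ⟨2*n, w_ge p _ (by omega)⟩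
  set J := Nat.find hexJ with hJdef
  have hJ : ¬ w p (t₀ + J + 1) := Nat.find_spec hexJ
  have hJmin : ∀ j < J, w p (t₀ + j + 1) := fun j hj => not_not.mp (Nat.find_min hexJ hj)
  -- height along the run
  have haux : ∀ j ≤ J, hgt p (t₀ + j + 1) = hgt p t₀ + j + 1 := by
    intro j
    induction j with
    | zero => intro _; rw [hgt_succ, if_pos hU]; push_cast; ring
    | succ j ih =>
      intro hj
      have : t₀ + (j+1) + 1 = (t₀ + j + 1) + 1 := by omega
      rw [this, hgt_succ, if_pos (hJmin j (by omega)), ih (by omega)]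
      push_cast; ring
  have hkk : hgt p (t₀ + J + 1) = hgt p t₀ + J + 1 := haux J le_rfl
  have hwlast : w p (t₀ + J) := by
    rcases Nat.eq_zero_or_pos J with h | h
    · rw [h]; exact hU
    · have := hJmin (J-1) (by omega)
      rw [show t₀ + (J-1) + 1 = t₀ + J from by omega] at this
      exact this
  have hrun2n : t₀ + J < 2*n := by
    by_contra hc
    exact w_ge p (t₀ + J) (by omega) hwlast
  have hp0 : 0 ≤ hgt p t₀ := hgt_nonneg p t₀ (by omega)
  have hk2n : t₀ + J + 1 < 2*n := by
    rcases Nat.lt_or_ge (t₀ + J + 1) (2*n) with h | h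
    · exact h
    · exfalso
      have he : t₀ + J + 1 = 2*n := by omega
      have := hgt_final p
      rw [hp, ← he, hkk] at this
      omega
  have hxk := hx (t₀ + J + 1) (by omega) hk2n
  unfold xval at hxk
  rw [show t₀ + J + 1 - 1 = t₀ + J from by omega] at hxk
  rw [if_pos hwlast, if_neg hJ] at hxk
  -- q-side bounds
  have hq0 : 0 ≤ hgt q (t₀ + J + 1) := hgt_nonneg q _ (by omega)
  have hl := (lip q (t₀+1) J).1
  rw [show t₀ + 1 + J = t₀ + J + 1 from by omega] at hl
  have hq1 : hgt q (t₀+1) = hgt q t₀ - 1 := by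
    rw [hgt_succ, if_neg hD]; ring
  have hpq : hgt p t₀ = hgt q t₀ := hgt_congr t₀ hmin t₀ le_rfl
  split_ifs at hxk <;> omega

lemma length_eq {n : ℕ} (p : DyckWord) (h : p.semilength = n) : p.toList.length = 2*n := by
  rw [← p.two_mul_semilength_eq_length, h]

open Finset in
lemma key (n : ℕ) (p q : DyckWord) (hp : p.toList.length = 2*n) (hq : q.toList.length = 2*n)
    (hx : ∀ k, 1 ≤ k → k < 2*n → xval p k = xval q k) : p = q := by
  by_contra hne
  have hw : ¬ ∀ t, (w p t ↔ w q t) := by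
    intro hall
    apply hne
    apply DyckWord.ext
    apply List.ext_getElem (by omega)
    intro t h1 h2
    have hiff := hall t
    unfold w at hiff
    rw [List.getD_eq_getElem?_getD, List.getD_eq_getElem?_getD,
      List.getElem?_eq_getElem h1, List.getElem?_eq_getElem h2] at hiff
    simp only [Option.getD_some] at hiff
    rcases (p.toList[t]).dichotomy with ha | ha <;> rcases (q.toList[t]).dichotomy with hb | hb <;>
      rw [ha, hb] <;> rw [ha, hb] at hiff <;> simp_all
  have hex : ∃ t, ¬ (w p t ↔ w q t) := by
    by_contra hc
    push_neg at hc
    exact hw hc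
  set t₀ := Nat.find hex with ht₀def
  have ht₀ := Nat.find_spec hex
  have hmin : ∀ t < t₀, (w p t ↔ w q t) := fun t ht => not_not.mp (Nat.find_min hex ht)
  by_cases hcase : w p t₀
  · have hDq : ¬ w q t₀ := fun hq' => ht₀ ⟨fun _ => hq', fun _ => hcase⟩
    exact key_aux n p q hp hq hx t₀ hmin hcase hDq
  · have hUq : w q t₀ := by
      by_contra hq'
      exact ht₀ ⟨fun h => absurd h hcase, fun h => absurd h hq'⟩
    exact key_aux n q p hq hp (fun k h1 h2 => (hx k h1 h2).symm) t₀
      (fun t ht => (hmin t ht).symm) hUq hcase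

end S13

open S13 in
theorem stmt_13 (n : ℕ) :
    ∃ f : {D : DyckWord // D.semilength = n} → Matrix (Fin n) (Fin n) ℤ,
      Function.Injective f ∧
      (∀ D, IsASM (f D) ∧ (f D)ᵀ = f D) ∧
      (∀ D D', D ≠ D' → ∃ k, xray (f D) k ≠ xray (f D') k) := by
  have hlen : ∀ D : {D : DyckWord // D.semilength = n}, D.1.toList.length = 2*n :=
    fun D => length_eq D.1 D.2
  have hxr : ∀ D D' : {D : DyckWord // D.semilength = n},
      (∀ k, xray (mat n D.1) k = xray (mat n D'.1) k) → D = D' := by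
    intro D D' hk
    apply Subtype.ext
    apply key n D.1 D'.1 (hlen D) (hlen D')
    intro k hk1 hk2
    rw [← xray_mat n D.1 (hlen D) k hk1 hk2, ← xray_mat n D'.1 (hlen D') k hk1 hk2]
    exact hk k
  refine ⟨fun D => mat n D.1, ?_, ?_, ?_⟩
  · intro D D' h
    simp only [] at h
    exact hxr D D' (fun k => by rw [h])
  · intro D
    refine ⟨⟨mat_entries n D.1, row_sum n D.1 (hlen D), col_sum n D.1 (hlen D),
      row_alt n D.1 (hlen D), col_alt n D.1 (hlen D)⟩, ?_⟩
    ext i j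
    rw [Matrix.transpose_apply]
    exact mat_symm n D.1 j i
  · intro D D' hne
    by_contra hc
    push_neg at hc
    exact hne (hxr D D' hc)
end

section
/- If A is an n×n alternating sign matrix whose X-ray (x_1,…,x_{2n-1}) satisfies x_1 = ⋯ = x_{k-1} = 0 and x_k ≠ 0, then all entries on the first k-1 antidiagonals of A are 0, and the entries on the k-th antidiagonal are all 0 or 1 with exactly x_k ones; in particular x_k > 0. -/
open Finset Matrix

lemma prefix_sum_succ {n : ℕ} (r : Fin n → ℤ) (m : ℕ) (hm : m < n) :
    (∑ j : Fin n, if (j : ℕ) < m + 1 then r j else 0)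
      = (∑ j : Fin n, if (j : ℕ) < m then r j else 0) + r ⟨m, hm⟩ := by
  have h : ∀ j : Fin n, (if (j : ℕ) < m + 1 then r j else 0)
      = (if (j : ℕ) < m then r j else 0) + (if j = ⟨m, hm⟩ then r j else 0) := by
    intro j
    rcases lt_trichotomy (j : ℕ) m with h | h | h
    · have : j ≠ ⟨m, hm⟩ := by intro hj; rw [hj] at h; simp at h
      simp [h, Nat.lt_succ_of_lt h, this]
    · have : j = ⟨m, hm⟩ := Fin.ext h
      simp [this, h]
    · have h1 : ¬ (j : ℕ) < m + 1 := by omega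
      have h2 : ¬ (j : ℕ) < m := by omega
      have : j ≠ ⟨m, hm⟩ := by intro hj; rw [hj] at h; simp at h
      simp [h1, h2, this]
  rw [Finset.sum_congr rfl (fun j _ => h j), Finset.sum_add_distrib]
  congr 1
  simp

lemma first_nonzero {n : ℕ} (r : Fin n → ℤ)
    (hv : ∀ j, r j = -1 ∨ r j = 0 ∨ r j = 1)
    (halt : ∀ j₁ j₂ : Fin n, j₁ < j₂ → r j₁ ≠ 0 → r j₂ ≠ 0 →
      (∀ j, j₁ < j → j < j₂ → r j = 0) → r j₂ = -r j₁)
    (hsum : ∑ j, r j = 1)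
    (j : Fin n) (hz : ∀ j' : Fin n, j' < j → r j' = 0) :
    r j = 0 ∨ r j = 1 := by
  have key : ∀ m : ℕ, m ≤ n →
      (∀ j : Fin n, (j : ℕ) < m → r j = 0) ∨
      ∃ j₀ jl : Fin n, (j₀ : ℕ) < m ∧ (jl : ℕ) < m ∧ r j₀ ≠ 0 ∧ r jl ≠ 0 ∧
        (∀ j : Fin n, j < j₀ → r j = 0) ∧
        (∀ j : Fin n, jl < j → (j : ℕ) < m → r j = 0) ∧
        2 * (∑ j : Fin n, if (j : ℕ) < m then r j else 0) = r j₀ + r jl := by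
    intro m
    induction m with
    | zero => intro _; left; intro j hj; omega
    | succ m ih =>
      intro hm1
      have hm : m < n := hm1
      set jm : Fin n := ⟨m, hm⟩ with hjm
      have hjmv : (jm : ℕ) = m := rfl
      rcases ih (le_of_lt hm1) with hall | ⟨j₀, jl, hj₀, hjl, hj₀0, hjl0, hzb, hza, hS⟩
      · by_cases hrm : r jm = 0
        · left
          intro j hj
          rcases Nat.lt_or_ge (j : ℕ) m with h | h
          · exact hall j h
          · have : j = jm := Fin.ext (by omega)
            rw [this]; exact hrm
        · right
          refine ⟨jm, jm, by omega, by omega, hrm, hrm, ?_, ?_, ?_⟩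
          · intro j hj
            rw [Fin.lt_def] at hj
            exact hall j (by omega)
          · intro j h1 h2
            rw [Fin.lt_def] at h1; omega
          · rw [prefix_sum_succ r m hm]
            have : (∑ j : Fin n, if (j : ℕ) < m then r j else 0) = 0 := by
              apply Finset.sum_eq_zero
              intro j _
              by_cases h : (j : ℕ) < m
              · simp [h, hall j h]
              · simp [h]
            rw [this]; ring
      · by_cases hrm : r jm = 0
        · right
          refine ⟨j₀, jl, by omega, by omega, hj₀0, hjl0, hzb, ?_, ?_⟩
          · intro j h1 h2
            rcases Nat.lt_or_ge (j : ℕ) m with h | h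
            · exact hza j h1 h
            · have : j = jm := Fin.ext (by omega)
              rw [this]; exact hrm
          · rw [prefix_sum_succ r m hm, hrm]
            rw [mul_add, hS]; ring
        · right
          have hlt : jl < jm := by rw [Fin.lt_def]; omega
          have halte : r jm = - r jl := by
            apply halt jl jm hlt hjl0 hrm
            intro j h1 h2
            rw [Fin.lt_def] at h2
            exact hza j h1 (by omega)
          refine ⟨j₀, jm, by omega, by omega, hj₀0, hrm, hzb, ?_, ?_⟩
          · intro j h1 h2
            rw [Fin.lt_def] at h1; omega
          · rw [prefix_sum_succ r m hm, mul_add, hS, halte]; ring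
  rcases key n le_rfl with hall | ⟨j₀, jl, _, _, hj₀0, hjl0, hzb, _, hS⟩
  · left; exact hall j j.isLt
  · have hfull : (∑ j : Fin n, if (j : ℕ) < n then r j else 0) = 1 := by
      rw [← hsum]
      exact Finset.sum_congr rfl (fun j _ => by simp [j.isLt])
    rw [hfull] at hS
    have h1 : r j₀ = 1 := by
      rcases hv j₀ with h | h | h
      · rcases hv jl with h' | h' | h' <;> omega
      · exact absurd h hj₀0
      · exact h
    by_cases hj : r j = 0
    · left; exact hj
    · right
      have : j = j₀ := by
        rcases lt_trichotomy j j₀ with h | h | h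
        · exact absurd (hzb j h) hj
        · exact h
        · exact absurd (hz j₀ h) hj₀0
      rw [this]; exact h1


theorem stmt_14 {n : ℕ} (A : Matrix (Fin n) (Fin n) ℤ) (hA : IsASM A)
    (k : ℕ) (hk : 1 ≤ k) (hzero : ∀ m, 1 ≤ m → m < k → xray A m = 0)
    (hk0 : xray A k ≠ 0) :
    (∀ i j : Fin n, (i : ℕ) + (j : ℕ) + 1 < k → A i j = 0) ∧
    (∀ i j : Fin n, (i : ℕ) + (j : ℕ) + 1 = k → A i j = 0 ∨ A i j = 1) ∧
    ((Finset.univ.filter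
        (fun p : Fin n × Fin n =>
          (p.1 : ℕ) + (p.2 : ℕ) + 1 = k ∧ A p.1 p.2 = 1)).card : ℤ) = xray A k ∧
    0 < xray A k := by
  obtain ⟨hv, hrow, _, haltrow, _⟩ := hA
  have partA : ∀ m, m < k → ∀ i j : Fin n, (i : ℕ) + (j : ℕ) + 1 = m → A i j = 0 := by
    intro m
    induction m using Nat.strong_induction_on with
    | _ m ih =>
      intro hmk i j hij
      have h01 : ∀ i' j' : Fin n, (i' : ℕ) + (j' : ℕ) + 1 = m → A i' j' = 0 ∨ A i' j' = 1 := by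
        intro i' j' h
        apply first_nonzero (A i') (hv i') (haltrow i') (hrow i')
        intro j'' hj''
        rw [Fin.lt_def] at hj''
        exact ih ((i' : ℕ) + (j'' : ℕ) + 1) (by omega) (by omega) i' j'' rfl
      have hx : xray A m = 0 := hzero m (by omega) hmk
      have hflat : xray A m = ∑ p : Fin n × Fin n,
          (if (p.1 : ℕ) + (p.2 : ℕ) + 1 = m then A p.1 p.2 else 0) := by
        unfold xray
        exact (Fintype.sum_prod_type (f := fun p : Fin n × Fin n =>
          if (p.1 : ℕ) + (p.2 : ℕ) + 1 = m then A p.1 p.2 else 0)).symm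
      have hx' : ∑ p : Fin n × Fin n,
          (if (p.1 : ℕ) + (p.2 : ℕ) + 1 = m then A p.1 p.2 else 0) = 0 := by
        rw [← hflat]; exact hx
      have hnn : ∀ p ∈ (Finset.univ : Finset (Fin n × Fin n)),
          0 ≤ (if (p.1 : ℕ) + (p.2 : ℕ) + 1 = m then A p.1 p.2 else 0) := by
        intro p _
        by_cases h : (p.1 : ℕ) + (p.2 : ℕ) + 1 = m
        · rcases h01 p.1 p.2 h with h' | h' <;> simp [h, h']
        · simp [h]
      have := (Finset.sum_eq_zero_iff_of_nonneg hnn).mp hx' (i, j) (Finset.mem_univ _)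
      simpa [hij] using this
  have partB : ∀ i j : Fin n, (i : ℕ) + (j : ℕ) + 1 = k → A i j = 0 ∨ A i j = 1 := by
    intro i j h
    apply first_nonzero (A i) (hv i) (haltrow i) (hrow i)
    intro j' hj'
    rw [Fin.lt_def] at hj'
    exact partA ((i : ℕ) + (j' : ℕ) + 1) (by omega) i j' rfl
  have partC : ((Finset.univ.filter
        (fun p : Fin n × Fin n =>
          (p.1 : ℕ) + (p.2 : ℕ) + 1 = k ∧ A p.1 p.2 = 1)).card : ℤ) = xray A k := by
    have hflat : xray A k = ∑ p : Fin n × Fin n,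
        (if (p.1 : ℕ) + (p.2 : ℕ) + 1 = k then A p.1 p.2 else 0) := by
      unfold xray
      exact (Fintype.sum_prod_type (f := fun p : Fin n × Fin n =>
        if (p.1 : ℕ) + (p.2 : ℕ) + 1 = k then A p.1 p.2 else 0)).symm
    rw [hflat]
    have h : ∀ p : Fin n × Fin n, (if (p.1 : ℕ) + (p.2 : ℕ) + 1 = k then A p.1 p.2 else 0)
        = (if ((p.1 : ℕ) + (p.2 : ℕ) + 1 = k ∧ A p.1 p.2 = 1) then (1 : ℤ) else 0) := by
      intro p
      by_cases h : (p.1 : ℕ) + (p.2 : ℕ) + 1 = k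
      · rcases partB p.1 p.2 h with h' | h' <;> simp [h, h']
      · simp [h]
    rw [Finset.sum_congr rfl (fun p _ => h p), Finset.sum_boole]
  refine ⟨fun i j h => partA _ h i j rfl, partB, partC, ?_⟩
  have h0 : (0 : ℤ) ≤ xray A k := partC ▸ Int.natCast_nonneg _
  exact lt_of_le_of_ne h0 (Ne.symm hk0)
end

section
/- An n×n alternating sign matrix A whose X-ray equals (1,0,1,0,…,0,1) (alternating ones and zeros) must be the identity matrix. -/
open Finset Matrix

theorem stmt_15 {n : ℕ} (A : Matrix (Fin n) (Fin n) ℤ) (hA : IsASM A)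
    (hx : ∀ k, 1 ≤ k → k ≤ 2 * n - 1 → xray A k = if Odd k then 1 else 0) :
    A = 1 := by
  obtain ⟨hrange, hrow, hcol, hrowalt, hcolalt⟩ := hA
  have key : ∀ k : ℕ, ∀ i j : Fin n, (i : ℕ) + (j : ℕ) + 1 = k →
      A i j = if (i : ℕ) = (j : ℕ) then 1 else 0 := by
    intro k
    induction k using Nat.strong_induction_on with
    | _ k IH =>
    intro i j hk
    have hdiag : ∀ c : Fin n, 2 * (c : ℕ) + 1 < k → A c c = 1 := by
      intro c hc
      have := IH (2 * (c : ℕ) + 1) hc c c (by omega)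
      simpa using this
    -- off-diagonal entries on diagonal k are nonpositive
    have hle : ∀ a b : Fin n, (a : ℕ) + (b : ℕ) + 1 = k → (a : ℕ) ≠ (b : ℕ) → A a b ≤ 0 := by
      intro a b hab hne
      rcases hrange a b with h | h | h
      · omega
      · omega
      · exfalso
        rcases Nat.lt_or_ge (a : ℕ) (b : ℕ) with hab' | hab'
        · have haa : A a a = 1 := hdiag a (by omega)
          have halt := hrowalt a a b (Fin.lt_def.mpr hab') (by rw [haa]; omega)
            (by rw [h]; omega)
            (by
              intro j' h1 h2
              have h1' : (a : ℕ) < (j' : ℕ) := Fin.lt_def.mp h1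
              have h2' : (j' : ℕ) < (b : ℕ) := Fin.lt_def.mp h2
              have := IH ((a : ℕ) + (j' : ℕ) + 1) (by omega) a j' rfl
              rw [this, if_neg (by omega)])
          rw [h, haa] at halt
          omega
        · have hba : (b : ℕ) < (a : ℕ) := by omega
          have hbb : A b b = 1 := hdiag b (by omega)
          have halt := hcolalt b b a (Fin.lt_def.mpr hba) (by rw [hbb]; omega)
            (by rw [h]; omega)
            (by
              intro i' h1 h2
              have h1' : (b : ℕ) < (i' : ℕ) := Fin.lt_def.mp h1
              have h2' : (i' : ℕ) < (a : ℕ) := Fin.lt_def.mp h2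
              have := IH ((i' : ℕ) + (b : ℕ) + 1) (by omega) i' b rfl
              rw [this, if_neg (by omega)])
          rw [h, hbb] at halt
          omega
    have hk1 : 1 ≤ k := by omega
    have hk2 : k ≤ 2 * n - 1 := by
      have := i.isLt; have := j.isLt; omega
    have hxk := hx k hk1 hk2
    have hsum : ∑ p : Fin n × Fin n,
        (if (p.1 : ℕ) + (p.2 : ℕ) + 1 = k then A p.1 p.2 else 0)
        = (if Odd k then 1 else 0) := by
      rw [← hxk, xray, Fintype.sum_prod_type]
    by_cases hpar : Odd k
    · obtain ⟨m, hm⟩ := hpar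
      have hmn : m < n := by have := i.isLt; have := j.isLt; omega
      set M : Fin n := ⟨m, hmn⟩ with hM
      rw [if_pos ⟨m, hm⟩] at hsum
      set f : Fin n × Fin n → ℤ :=
        fun p => if (p.1 : ℕ) + (p.2 : ℕ) + 1 = k then A p.1 p.2 else 0 with hf
      have hsplit := Finset.add_sum_erase Finset.univ f (Finset.mem_univ (M, M))
      have hrest_nonpos : ∀ p ∈ Finset.univ.erase (M, M), f p ≤ 0 := by
        intro p hp
        rw [hf]
        by_cases hc : (p.1 : ℕ) + (p.2 : ℕ) + 1 = k
        · simp only [if_pos hc]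
          apply hle p.1 p.2 hc
          intro heq
          have h1 : (p.1 : ℕ) = m := by omega
          have h2 : (p.2 : ℕ) = m := by omega
          have hpM : p = (M, M) := by
            apply Prod.ext
            · exact Fin.ext h1
            · exact Fin.ext h2
          exact (Finset.mem_erase.mp hp).1 hpM
        · simp only [if_neg hc]
          exact le_rfl
      have hrest_le : ∑ p ∈ Finset.univ.erase (M, M), f p ≤ 0 :=
        Finset.sum_nonpos hrest_nonpos
      have hfMM : f (M, M) = A M M := by
        rw [hf]; exact if_pos (by simp [hM]; omega)
      have hMle : A M M ≤ 1 := by rcases hrange M M with h | h | h <;> omega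
      rw [hsum, hfMM] at hsplit
      have hAMM : A M M = 1 := by omega
      have hS0 : ∑ p ∈ Finset.univ.erase (M, M), f p = 0 := by omega
      have hzero := (Finset.sum_eq_zero_iff_of_nonpos hrest_nonpos).mp hS0
      by_cases hij : (i : ℕ) = (j : ℕ)
      · rw [if_pos hij]
        have hi : i = M := Fin.ext (by simp [hM]; omega)
        have hj : j = M := Fin.ext (by simp [hM]; omega)
        rw [hi, hj, hAMM]
      · rw [if_neg hij]
        have hmem : (i, j) ∈ Finset.univ.erase (M, M) := by
          refine Finset.mem_erase.mpr ⟨?_, Finset.mem_univ _⟩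
          intro hc
          apply hij
          rw [Prod.mk.injEq] at hc
          obtain ⟨h1, h2⟩ := hc
          rw [h1, h2]
        have := hzero (i, j) hmem
        rw [hf] at this
        simpa [if_pos hk] using this
    · rw [if_neg hpar] at hsum
      have hnonpos : ∀ p ∈ (Finset.univ : Finset (Fin n × Fin n)),
          (if (p.1 : ℕ) + (p.2 : ℕ) + 1 = k then A p.1 p.2 else 0) ≤ 0 := by
        intro p _
        by_cases hc : (p.1 : ℕ) + (p.2 : ℕ) + 1 = k
        · rw [if_pos hc]
          apply hle p.1 p.2 hc
          intro heq
          exact hpar ⟨(p.1 : ℕ), by omega⟩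
        · rw [if_neg hc]
      have hzero := (Finset.sum_eq_zero_iff_of_nonpos hnonpos).mp hsum
      have := hzero (i, j) (Finset.mem_univ _)
      rw [if_pos hk] at this
      rw [this, if_neg (by intro heq; exact hpar ⟨(i : ℕ), by omega⟩)]
  ext i j
  have := key ((i : ℕ) + (j : ℕ) + 1) i j rfl
  rw [this, Matrix.one_apply]
  by_cases h : i = j
  · rw [if_pos h, if_pos (by rw [h])]
  · rw [if_neg h, if_neg (fun hc => h (Fin.ext hc))]
end

section
/- For n ≥ 3, there exist two distinct n×n alternating sign matrices with the same X-ray; equivalently, not every ASM of size n ≥ 3 is determined by its X-ray. -/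
open Finset Matrix

lemma isASM_permMatrix {n : ℕ} (σ : Equiv.Perm (Fin n)) : IsASM (permMatrix σ) := by
  refine ⟨?_, ?_, ?_, ?_, ?_⟩
  · intro i j; unfold permMatrix; split <;> simp
  · intro i
    unfold permMatrix
    simp [Equiv.apply_eq_iff_eq_symm_apply, Finset.sum_ite_eq']
  · intro j
    unfold permMatrix
    simp [Finset.sum_ite_eq]
  · intro i j₁ j₂ h h1 h2 _
    exfalso
    unfold permMatrix at h1 h2
    have e1 : σ j₁ = i := by by_contra hc; simp [hc] at h1
    have e2 : σ j₂ = i := by by_contra hc; simp [hc] at h2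
    exact absurd (σ.injective (e1.trans e2.symm)) h.ne
  · intro j i₁ i₂ h h1 h2 _
    exfalso
    unfold permMatrix at h1 h2
    have e1 : σ j = i₁ := by by_contra hc; simp [hc] at h1
    have e2 : σ j = i₂ := by by_contra hc; simp [hc] at h2
    exact absurd (e1.symm.trans e2) h.ne

lemma xray_permMatrix {n : ℕ} (σ : Equiv.Perm (Fin n)) (k : ℕ) :
    xray (permMatrix σ) k = ∑ j : Fin n, if ((σ j : ℕ) + (j : ℕ) + 1 = k) then 1 else 0 := by
  unfold xray permMatrix
  rw [Finset.sum_comm]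
  refine Finset.sum_congr rfl fun j _ => ?_
  have key : ∀ i : Fin n, (if (i : ℕ) + (j : ℕ) + 1 = k then (if σ j = i then (1:ℤ) else 0) else 0)
      = if σ j = i then (if ((σ j : ℕ) + (j : ℕ) + 1 = k) then 1 else 0) else 0 := by
    intro i
    split <;> split <;> simp_all
  rw [Finset.sum_congr rfl fun i _ => key i, Finset.sum_ite_eq]
  simp

theorem stmt_17 {n : ℕ} (hn : 3 ≤ n) :
    ∃ A B : Matrix (Fin n) (Fin n) ℤ, IsASM A ∧ IsASM B ∧ A ≠ B ∧
      ∀ k, xray A k = xray B k := by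
  set a : Fin n := ⟨0, by omega⟩
  set b : Fin n := ⟨1, by omega⟩
  set c : Fin n := ⟨2, by omega⟩
  have hab : a ≠ b := by simp [a, b, Fin.ext_iff]
  have hbc : b ≠ c := by simp [b, c, Fin.ext_iff]
  have hac : a ≠ c := by simp [a, c, Fin.ext_iff]
  set σ : Equiv.Perm (Fin n) := Equiv.swap a b * Equiv.swap b c
  refine ⟨permMatrix σ, permMatrix σ.symm, isASM_permMatrix _, isASM_permMatrix _, ?_, ?_⟩
  · have hσa : σ a = b := by
      simp [σ, Equiv.swap_apply_of_ne_of_ne hab hac, Equiv.swap_apply_left]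
    have hσc : σ c = b → False := by
      intro h
      have : σ c = a := by simp [σ, Equiv.swap_apply_right, Equiv.swap_apply_left]
      rw [this] at h; exact hab h
    intro h
    have h1 : permMatrix σ b a = permMatrix σ.symm b a := by rw [h]
    have h2 : σ.symm a = c := by
      rw [Equiv.symm_apply_eq]
      simp [σ, Equiv.swap_apply_right, Equiv.swap_apply_left]
    unfold permMatrix at h1
    rw [hσa, h2, if_pos rfl, if_neg (fun hh => hbc hh.symm)] at h1
    exact one_ne_zero h1
  · intro k
    rw [xray_permMatrix, xray_permMatrix]
    rw [← Equiv.sum_comp σ (fun j => if ((σ.symm j : ℕ) + (j : ℕ) + 1 = k) then (1:ℤ) else 0)]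
    refine Finset.sum_congr rfl fun j _ => ?_
    simp [Equiv.symm_apply_apply, Nat.add_comm (σ j : ℕ) (j : ℕ)]
end
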